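/- Let f : ℝ^m → ℝ be differentiable with L-Lipschitz continuous gradient, let σ ≥ 0, n ≥ 1, η > 0, and let w⁺ = w − η(A_σ^{(n)})^{-1}∇f(w). Then f(w⁺) ≤ f(w) − η(1 − ηL/2)·‖∇f(w)‖²_{(A_σ^{(n)})^{-1}}, where ‖g‖²_{(A_σ^{(n)})^{-1}} = ⟨g, (A_σ^{(n)})^{-1}g⟩. -/

import Mathlib

open Matrix

/-- The `m × m` periodic forward finite difference matrix `D₊`. -/
noncomputable def Dplus (m : ℕ) [NeZero m] : Matrix (Fin m) (Fin m) ℝ :=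
  Matrix.of fun i j => if j = i then -1 else if j = i + 1 then 1 else 0

/-- The periodic backward finite difference matrix `D₋ = -D₊ᵀ`. -/
noncomputable def Dminus (m : ℕ) [NeZero m] : Matrix (Fin m) (Fin m) ℝ := -(Dplus m)ᵀ

/-- The periodic one-dimensional discrete Laplacian `L = D₋ D₊`. -/
noncomputable def Lap (m : ℕ) [NeZero m] : Matrix (Fin m) (Fin m) ℝ := Dminus m * Dplus m

/-- The Laplacian smoothing matrix `A_σ = I - σ L`. -/
noncomputable def MatA (m : ℕ) [NeZero m] (σ : ℝ) : Matrix (Fin m) (Fin m) ℝ :=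
  1 - σ • Lap m

/-- The `n`-th order smoothing matrix `A_σ⁽ⁿ⁾ = I + (-1)ⁿ σ Lⁿ`. -/
noncomputable def MatAn (m : ℕ) [NeZero m] (σ : ℝ) (n : ℕ) : Matrix (Fin m) (Fin m) ℝ :=
  1 + ((-1 : ℝ) ^ n * σ) • Lap m ^ n

/-- Descent lemma: for `f` with `L`-Lipschitz gradient,
`f y ≤ f x + ⟨∇f x, y - x⟩ + L/2 ‖y - x‖²`. -/
lemma descent_aux {E : Type*} [NormedAddCommGroup E] [InnerProductSpace ℝ E] [CompleteSpace E]
    (f : E → ℝ) (g : E → E) (hg : ∀ x, HasGradientAt f (g x) x)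
    (L : ℝ) (hlip : ∀ x y, ‖g x - g y‖ ≤ L * ‖x - y‖) (x y : E) :
    f y ≤ f x + inner ℝ (g x) (y - x) + L / 2 * ‖y - x‖ ^ 2 := by
  set v := y - x with hv
  set φ : ℝ → ℝ := fun t => f (x + t • v) - t * inner ℝ (g x) v - L * t ^ 2 / 2 * ‖v‖ ^ 2 with hφdef
  have hφ : ∀ t : ℝ, HasDerivAt φ
      ((inner ℝ (g (x + t • v)) v : ℝ) - inner ℝ (g x) v - L * t * ‖v‖ ^ 2) t := by
    intro t
    have h1 : HasDerivAt (fun t : ℝ => x + t • v) v t := by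
      simpa using ((hasDerivAt_id t).smul_const v).const_add x
    have h2 : HasDerivAt (fun t : ℝ => f (x + t • v))
        ((inner ℝ (g (x + t • v)) v : ℝ)) t := by
      have := ((hg (x + t • v)).hasFDerivAt.comp_hasDerivAt t h1)
      exact this
    have h3 : HasDerivAt (fun t : ℝ => t * (inner ℝ (g x) v : ℝ)) (inner ℝ (g x) v : ℝ) t := by
      simpa using (hasDerivAt_id t).mul_const (inner ℝ (g x) v : ℝ)
    have h4 : HasDerivAt (fun t : ℝ => L * t ^ 2 / 2 * ‖v‖ ^ 2) (L * t * ‖v‖ ^ 2) t := by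
      have : HasDerivAt (fun t : ℝ => t ^ 2) (2 * t) t := by
        simpa using hasDerivAt_pow 2 t
      have := ((this.const_mul L).div_const 2).mul_const (‖v‖ ^ 2)
      rw [show L * t * ‖v‖ ^ 2 = L * (2 * t) / 2 * ‖v‖ ^ 2 by ring]; exact this
    exact (h2.sub h3).sub h4
  have hanti : AntitoneOn φ (Set.Icc (0:ℝ) 1) := by
    apply antitoneOn_of_deriv_nonpos (convex_Icc 0 1)
    · exact fun t _ => ((hφ t).differentiableAt.continuousAt).continuousWithinAt
    · exact fun t _ => ((hφ t).differentiableAt).differentiableWithinAt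
    · intro t ht
      rw [interior_Icc] at ht
      rw [(hφ t).deriv]
      have h5 : (inner ℝ (g (x + t • v)) v : ℝ) - inner ℝ (g x) v
          = inner ℝ (g (x + t • v) - g x) v := by
        rw [inner_sub_left]
      rw [h5]
      have h6 : (inner ℝ (g (x + t • v) - g x) v : ℝ) ≤ ‖g (x + t • v) - g x‖ * ‖v‖ :=
        real_inner_le_norm _ _
      have h7 : ‖g (x + t • v) - g x‖ ≤ L * (t * ‖v‖) := by
        have := hlip (x + t • v) x
        simpa [norm_smul, abs_of_pos ht.1, mul_assoc] using this
      nlinarith [norm_nonneg v, ht.1.le]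
  have := hanti (Set.left_mem_Icc.2 zero_le_one) (Set.right_mem_Icc.2 zero_le_one) zero_le_one
  simp only [hφdef, zero_smul, add_zero, one_smul, zero_mul, sub_zero, zero_pow, mul_zero,
    zero_div, one_pow, mul_one] at this
  have hy : x + v = y := by rw [hv]; abel
  rw [hy] at this
  linarith

lemma matAn_eq (m : ℕ) [NeZero m] (σ : ℝ) (n : ℕ) :
    MatAn m σ n = 1 + σ • ((Dplus m)ᴴ * Dplus m) ^ n := by
  have hH : (Dplus m)ᴴ = (Dplus m)ᵀ := by
    ext i j; simp [conjTranspose_apply]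
  have hLap : Lap m = (-1 : ℝ) • ((Dplus m)ᴴ * Dplus m) := by
    rw [hH, Lap, Dminus]; simp [neg_mul]
  rw [MatAn, hLap, smul_pow, smul_smul]
  congr 1
  have : (-1:ℝ) ^ n * σ * (-1) ^ n = σ := by
    rw [mul_comm ((-1:ℝ)^n) σ, mul_assoc, ← pow_add, ← two_mul, pow_mul]
    norm_num
  rw [this]

lemma matAn_posDef (m : ℕ) [NeZero m] (σ : ℝ) (hσ : 0 ≤ σ) (n : ℕ) :
    (MatAn m σ n).PosDef := by
  rw [matAn_eq]
  refine Matrix.PosDef.one.add_posSemidef ?_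
  have hC : (((Dplus m)ᴴ * Dplus m) ^ n).PosSemidef :=
    (Matrix.posSemidef_conjTranspose_mul_self (Dplus m)).pow n
  constructor
  · unfold Matrix.IsHermitian
    rw [conjTranspose_smul, hC.1.eq]
    congr 1
  · intro x
    exact (hC.smul hσ).2 x

lemma key_ineq (m : ℕ) [NeZero m] (σ : ℝ) (hσ : 0 ≤ σ) (n : ℕ) (gv : Fin m → ℝ) :
    ((MatAn m σ n)⁻¹ *ᵥ gv) ⬝ᵥ ((MatAn m σ n)⁻¹ *ᵥ gv) ≤ gv ⬝ᵥ ((MatAn m σ n)⁻¹ *ᵥ gv) := by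
  have hA := matAn_posDef m σ hσ n
  set A := MatAn m σ n with hAdef
  set dv := A⁻¹ *ᵥ gv with hdv
  have hunit : IsUnit A.det := hA.det_pos.ne'.isUnit
  have hg : A *ᵥ dv = gv := by
    rw [hdv, mulVec_mulVec, Matrix.mul_nonsing_inv _ hunit, one_mulVec]
  have h1 : gv ⬝ᵥ dv = dv ⬝ᵥ (A *ᵥ dv) := by
    conv_lhs => rw [← hg]
    exact dotProduct_comm _ _
  have hC : (((Dplus m)ᴴ * Dplus m) ^ n).PosSemidef :=
    (Matrix.posSemidef_conjTranspose_mul_self (Dplus m)).pow n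
  have h2 : dv ⬝ᵥ (A *ᵥ dv) = dv ⬝ᵥ dv + σ * (dv ⬝ᵥ ((((Dplus m)ᴴ * Dplus m) ^ n) *ᵥ dv)) := by
    rw [hAdef, matAn_eq, add_mulVec, one_mulVec, dotProduct_add, smul_mulVec,
      dotProduct_smul, smul_eq_mul]
  have h3 : 0 ≤ dv ⬝ᵥ ((((Dplus m)ᴴ * Dplus m) ^ n) *ᵥ dv) := by
    have := hC.dotProduct_mulVec_nonneg dv
    simpa using this
  rw [h1, h2]
  nlinarith

/-- Descent property of one LSGD step: if `∇f` is `L`-Lipschitz and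
`w⁺ = w - η (A_σ⁽ⁿ⁾)⁻¹ ∇f(w)`, then
`f(w⁺) ≤ f(w) - η(1 - ηL/2) ‖∇f(w)‖²_{(A_σ⁽ⁿ⁾)⁻¹}`, where
`‖g‖²_{(A_σ⁽ⁿ⁾)⁻¹} = ⟨g, (A_σ⁽ⁿ⁾)⁻¹ g⟩`. -/
theorem stmt17 (m : ℕ) [NeZero m] (σ : ℝ) (hσ : 0 ≤ σ) (n : ℕ) (hn : 1 ≤ n)
    (f : EuclideanSpace ℝ (Fin m) → ℝ)
    (gradf : EuclideanSpace ℝ (Fin m) → EuclideanSpace ℝ (Fin m))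
    (hgrad : ∀ x, HasGradientAt f (gradf x) x)
    (L : ℝ) (hlip : ∀ x y, ‖gradf x - gradf y‖ ≤ L * ‖x - y‖)
    (η : ℝ) (hη : 0 < η)
    (w wplus : EuclideanSpace ℝ (Fin m))
    (hw : wplus = w - η • Matrix.toEuclideanLin ((MatAn m σ n)⁻¹) (gradf w)) :
    f wplus ≤ f w - η * (1 - η * L / 2) *
      (inner ℝ (gradf w) (Matrix.toEuclideanLin ((MatAn m σ n)⁻¹) (gradf w)) : ℝ) := by
  -- L is nonnegative
  have hL : 0 ≤ L := by
    have h0 : (EuclideanSpace.single (0 : Fin m) (1:ℝ)) ≠ 0 := by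
      intro h
      have := congrFun (congrArg (fun (z : EuclideanSpace ℝ (Fin m)) i => z i) h) 0
      simp at this
    have := hlip (EuclideanSpace.single (0 : Fin m) (1:ℝ)) 0
    simp only [sub_zero] at this
    have hpos : 0 < ‖(EuclideanSpace.single (0 : Fin m) (1:ℝ))‖ := norm_pos_iff.2 h0
    nlinarith [norm_nonneg (gradf (EuclideanSpace.single (0 : Fin m) (1:ℝ)) - gradf 0)]
  set g := gradf w with hgdef
  set d := Matrix.toEuclideanLin ((MatAn m σ n)⁻¹) g with hddef
  -- the key quadratic form inequality, transported to the inner product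
  have hkey : ‖d‖ ^ 2 ≤ (inner ℝ g d : ℝ) := by
    have h1 : (inner ℝ g d : ℝ) = (WithLp.equiv 2 (Fin m → ℝ) g) ⬝ᵥ
        ((MatAn m σ n)⁻¹ *ᵥ (WithLp.equiv 2 (Fin m → ℝ) g)) := by
      rw [EuclideanSpace.inner_eq_star_dotProduct, dotProduct_comm]
      congr 1
    have h2 : ‖d‖ ^ 2 = ((MatAn m σ n)⁻¹ *ᵥ (WithLp.equiv 2 (Fin m → ℝ) g)) ⬝ᵥ
        ((MatAn m σ n)⁻¹ *ᵥ (WithLp.equiv 2 (Fin m → ℝ) g)) := by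
      rw [← real_inner_self_eq_norm_sq]
      rw [EuclideanSpace.inner_eq_star_dotProduct]
      congr 1
    rw [h1, h2]
    exact key_ineq m σ hσ n _
  have hd0 : 0 ≤ (inner ℝ g d : ℝ) := le_trans (by positivity) hkey
  -- descent lemma
  have hdesc := descent_aux f gradf hgrad L hlip w wplus
  rw [hw] at hdesc ⊢
  have hsub : w - η • d - w = -(η • d) := by abel
  rw [hsub] at hdesc
  have hinner : (inner ℝ g (-(η • d)) : ℝ) = -(η * inner ℝ g d) := by
    rw [inner_neg_right, real_inner_smul_right]
  have hnorm : ‖-(η • d)‖ ^ 2 = η ^ 2 * ‖d‖ ^ 2 := by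
    rw [norm_neg, norm_smul]
    simp [abs_of_pos hη, mul_pow]
  rw [hinner, hnorm] at hdesc
  have hstep : L / 2 * (η ^ 2 * ‖d‖ ^ 2) ≤ L / 2 * (η ^ 2 * (inner ℝ g d : ℝ)) := by
    apply mul_le_mul_of_nonneg_left _ (by linarith)
    exact mul_le_mul_of_nonneg_left hkey (by positivity)
  calc f (w - η • d) ≤ f w + -(η * inner ℝ g d) + L / 2 * (η ^ 2 * ‖d‖ ^ 2) := hdesc
    _ ≤ f w + -(η * inner ℝ g d) + L / 2 * (η ^ 2 * (inner ℝ g d : ℝ)) := by linarith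
    _ = f w - η * (1 - η * L / 2) * (inner ℝ g d : ℝ) := by ring
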